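/- Let V be a vertex operator algebra satisfying the C₂-cofiniteness condition (dim V/C₂(V) < ∞) and M a subspace with C₂(V) ⊆ M. If u ∈ ⊕_{i=1}^k V_i for some positive integer k (i.e. u has positive weights), then u ∈ sr_{0,-1}(M). -/

import Mathlib

open scoped BigOperators

noncomputable section

/-- The generalized binomial coefficient `p choose i` for `p : ℤ`, as a complex number. -/
def zchoose (p : ℤ) (i : ℕ) : ℂ :=
  (∏ j ∈ Finset.range i, ((p : ℂ) - (j : ℂ))) / (i.factorial : ℂ)

/-- A vertex algebra over `ℂ`: a bilinear system of modes `u ↦ u_n`, a vacuum vector `𝟙`,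
truncation, vacuum/creation axioms and the Borcherds (Jacobi) identity. -/
structure VertexAlgebra (V : Type) [AddCommGroup V] [Module ℂ V] where
  mode : V → ℤ → V → V
  one : V
  mode_add_left : ∀ (u v : V) (n : ℤ) (w : V), mode (u + v) n w = mode u n w + mode v n w
  mode_smul_left : ∀ (c : ℂ) (u : V) (n : ℤ) (w : V), mode (c • u) n w = c • mode u n w
  mode_add_right : ∀ (u : V) (n : ℤ) (v w : V), mode u n (v + w) = mode u n v + mode u n w
  mode_smul_right : ∀ (u : V) (n : ℤ) (c : ℂ) (v : V), mode u n (c • v) = c • mode u n v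
  trunc : ∀ u v : V, ∃ N : ℤ, ∀ n ≥ N, mode u n v = 0
  vacuum_left : ∀ (n : ℤ) (v : V), mode one n v = if n = -1 then v else 0
  creation_nonneg : ∀ (u : V) (n : ℤ), 0 ≤ n → mode u n one = 0
  creation : ∀ u : V, mode u (-1) one = u
  borcherds : ∀ (u v w : V) (p q r : ℤ),
    ∑ᶠ i : ℕ, zchoose p i • mode (mode u (r + i) v) (p + q - i) w =
      ∑ᶠ i : ℕ, ((-1 : ℂ) ^ i * zchoose r i) •
        (mode u (p + r - i) (mode v (q + i) w) -
          ((-1 : ℂ) ^ r) • mode v (q + r - i) (mode u (p + i) w))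

/-- A list of mode indices all equal to `0` or `-1`. -/
def GoodIdx (ns : List ℤ) : Prop := ∀ n ∈ ns, n = 0 ∨ n = -1

namespace VertexAlgebra

variable {V : Type} [AddCommGroup V] [Module ℂ V] (VA : VertexAlgebra V)

/-- The translation operator `𝒟 v = v_{-2} 𝟙`. -/
def D (v : V) : V := VA.mode v (-2) VA.one

/-- `C₂(V) = span_ℂ { u_{-2} v }`. -/
def C2 : Submodule ℂ V := Submodule.span ℂ {w : V | ∃ u v : V, w = VA.mode u (-2) v}

/-- `Cₙ(V) = span_ℂ { u_{-n} v }`. -/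
def Cn (n : ℕ) : Submodule ℂ V :=
  Submodule.span ℂ {w : V | ∃ u v : V, w = VA.mode u (-(n : ℤ)) v}


/-- The iterated word `a_{n₁} a_{n₂} ⋯ a_{n_t} a`. -/
def word (a : V) (ns : List ℤ) : V := ns.foldr (fun n acc => VA.mode a n acc) a

/-- The radical `r_{0,-1}(M)` of a subspace `M` with respect to the 0-th and (-1)-th products. -/
def rad (M : Set V) : Set V :=
  {v : V | ∃ m : ℕ, ∀ ns : List ℤ, GoodIdx ns → m ≤ ns.length → VA.word v ns ∈ M}

/-- The left-strong radical `lsr_{0,-1}(M)`. -/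
def lsrad (M : Set V) : Set V :=
  {v : V | ∀ b : V, ∃ m : ℕ, ∀ (ns : List ℤ) (s : ℤ), GoodIdx ns → m ≤ ns.length →
    (s = 0 ∨ s = -1) → VA.mode b s (VA.word v ns) ∈ M}

/-- The right-strong radical `rsr_{0,-1}(M)`. -/
def rsrad (M : Set V) : Set V :=
  {v : V | ∀ w : V, ∃ m : ℕ, ∀ (ns : List ℤ) (s : ℤ), GoodIdx ns → m ≤ ns.length →
    (s = 0 ∨ s = -1) → VA.mode (VA.word v ns) s w ∈ M}

/-- The strong radical `sr_{0,-1}(M) = lsr_{0,-1}(M) ∩ rsr_{0,-1}(M)`. -/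
def srad (M : Set V) : Set V := VA.lsrad M ∩ VA.rsrad M

/-- `M` is a Mathieu-Zhao subspace of `V` with respect to the 0-th and (-1)-th products. -/
def IsMZ (M : Set V) : Prop := VA.rad M = VA.srad M

/-- A (two-sided) ideal of a vertex algebra. -/
def IsIdeal (I : Submodule ℂ V) : Prop :=
  ∀ (v w : V) (n : ℤ), w ∈ I → VA.mode v n w ∈ I ∧ VA.mode w n v ∈ I

/-- `t`-th power of `a` under the (-1)-th product: `a_{-1}(a_{-1}(⋯ a))`, with `pow a 0 = 𝟙`. -/
def pow (a : V) (t : ℕ) : V :=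
  Nat.rec VA.one (fun _ acc => VA.mode a (-1) acc) t

end VertexAlgebra

/-- A homomorphism of vertex algebras: a linear map preserving all modes and the vacuum. -/
def VertexAlgebra.IsHom {V W : Type} [AddCommGroup V] [Module ℂ V] [AddCommGroup W]
    [Module ℂ W] (VA : VertexAlgebra V) (WA : VertexAlgebra W) (f : V →ₗ[ℂ] W) : Prop :=
  f VA.one = WA.one ∧ ∀ (u v : V) (n : ℤ), f (VA.mode u n v) = WA.mode (f u) n (f v)

/-- A vertex operator algebra: a `ℤ`-graded vertex algebra with finite-dimensional
pieces, grading bounded below, and a conformal vector `ω` whose modes `L(n) = ω_{n+1}`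
satisfy the Virasoro relations, give the grading by `L(0)`, and realize `L(-1) = 𝒟`. -/
structure VertexOperatorAlgebra (V : Type) [AddCommGroup V] [Module ℂ V]
    extends VertexAlgebra V where
  grade : ℤ → Submodule ℂ V
  internal : DirectSum.IsInternal grade
  one_mem : one ∈ grade 0
  mode_grade : ∀ {k m n : ℤ} {u w : V}, u ∈ grade k → w ∈ grade n →
    mode u m w ∈ grade (k + n - m - 1)
  fin_dim : ∀ n : ℤ, FiniteDimensional ℂ (grade n)
  bounded_below : ∃ n₀ : ℤ, ∀ n < n₀, grade n = ⊥
  omega : V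
  omega_mem : omega ∈ grade 2
  central_charge : ℂ
  virasoro : ∀ (m n : ℤ) (v : V),
    mode omega (m + 1) (mode omega (n + 1) v) - mode omega (n + 1) (mode omega (m + 1) v) =
      ((m : ℂ) - (n : ℂ)) • mode omega (m + n + 1) v +
        (if m + n = 0 then (((m : ℂ) ^ 3 - (m : ℂ)) / 12) * central_charge else 0) • v
  L0_grading : ∀ (n : ℤ) (v : V), v ∈ grade n → mode omega 1 v = (n : ℂ) • v
  L_neg1 : ∀ v : V, mode omega 0 v = mode v (-2) one

section Aux
set_option linter.unusedSectionVars false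

open Function

variable {V : Type} [AddCommGroup V] [Module ℂ V]

/-! ### finsum helpers -/

lemma finsum_mem_submodule (p : Submodule ℂ V) (f : ℕ → V) (h : ∀ i, f i ∈ p) :
    ∑ᶠ i, f i ∈ p := by
  by_cases hf : (Function.support f).Finite
  · rw [finsum_eq_sum f hf]
    exact Submodule.sum_mem _ fun i _ => h i
  · rw [finsum_of_infinite_support hf]
    exact p.zero_mem

lemma finsum_eq_head_add (f : ℕ → V) (hfin : (Function.support f).Finite) :
    ∑ᶠ i, f i = f 0 + ∑ᶠ i, if i = 0 then 0 else f i := by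
  have hsplit : ∀ i, f i = (if i = 0 then f 0 else 0) + (if i = 0 then 0 else f i) := by
    intro i; by_cases hi : i = 0 <;> simp [hi]
  have h1 : (Function.support fun i => if i = 0 then f 0 else (0 : V)).Finite := by
    apply Set.Finite.subset (Set.finite_singleton 0)
    intro i hi
    by_cases h0 : i = 0
    · simp [h0]
    · simp [h0] at hi
  have h2 : (Function.support fun i => if i = 0 then (0 : V) else f i).Finite := by
    apply Set.Finite.subset hfin
    intro i hi
    by_cases h0 : i = 0
    · simp [h0] at hi
    · simpa [h0, Function.mem_support] using hi
  calc ∑ᶠ i, f i = ∑ᶠ i, ((if i = 0 then f 0 else 0) + (if i = 0 then 0 else f i)) :=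
        finsum_congr hsplit
    _ = (∑ᶠ i, if i = 0 then f 0 else 0) + ∑ᶠ i, if i = 0 then 0 else f i :=
        finsum_add_distrib h1 h2
    _ = f 0 + ∑ᶠ i, if i = 0 then 0 else f i := by
        rw [finsum_eq_single _ 0 (by intro x hx; simp [hx])]
        simp

lemma finsum_eq_two (f : ℕ → V) (h : ∀ i, 2 ≤ i → f i = 0) : ∑ᶠ i, f i = f 0 + f 1 := by
  have hsub : Function.support f ⊆ (({0, 1} : Finset ℕ) : Set ℕ) := by
    intro i hi
    simp only [Finset.coe_insert, Finset.coe_singleton, Set.mem_insert_iff,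
      Set.mem_singleton_iff]
    by_contra hc
    push_neg at hc
    exact hi (h i (by omega))
  rw [finsum_eq_sum_of_support_subset f hsub]
  simp [Finset.sum_pair]

/-! ### zchoose lemmas -/

lemma zchoose_self_zero (p : ℤ) : zchoose p 0 = 1 := by simp [zchoose]

lemma zchoose_zero_succ (i : ℕ) : zchoose 0 (i + 1) = 0 := by
  have : (∏ j ∈ Finset.range (i + 1), (((0 : ℤ) : ℂ) - (j : ℂ))) = 0 :=
    Finset.prod_eq_zero (Finset.mem_range.2 (Nat.succ_pos i)) (by simp)
  rw [zchoose, this, zero_div]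

lemma zchoose_one (p : ℤ) : zchoose p 1 = p := by simp [zchoose]

namespace VertexAlgebra

variable (VA : VertexAlgebra V)

/-- left multiplication as a linear map -/
def lmode (n : ℤ) (w : V) : V →ₗ[ℂ] V where
  toFun v := VA.mode v n w
  map_add' a b := VA.mode_add_left a b n w
  map_smul' c a := VA.mode_smul_left c a n w

/-- right multiplication as a linear map -/
def rmode (v : V) (n : ℤ) : V →ₗ[ℂ] V where
  toFun w := VA.mode v n w
  map_add' := VA.mode_add_right v n
  map_smul' c w := VA.mode_smul_right v n c w

@[simp] lemma lmode_apply (n : ℤ) (w v : V) : VA.lmode n w v = VA.mode v n w := rfl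
@[simp] lemma rmode_apply (v : V) (n : ℤ) (w : V) : VA.rmode v n w = VA.mode v n w := rfl

lemma mode_zero_left (n : ℤ) (w : V) : VA.mode 0 n w = 0 := (VA.lmode n w).map_zero

lemma mode_zero_right (v : V) (n : ℤ) : VA.mode v n 0 = 0 := (VA.rmode v n).map_zero

/-- Borcherds identity with `p = 0` (iterate formula). -/
lemma borcherds_p0 (u v w : V) (q r : ℤ) :
    VA.mode (VA.mode u r v) q w =
      ∑ᶠ i : ℕ, ((-1 : ℂ) ^ i * zchoose r i) •
        (VA.mode u (r - i) (VA.mode v (q + i) w) -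
          ((-1 : ℂ) ^ r) • VA.mode v (q + r - i) (VA.mode u (0 + i) w)) := by
  have h := VA.borcherds u v w 0 q r
  rw [finsum_eq_single _ 0 (by
    intro i hi
    obtain ⟨j, rfl⟩ := Nat.exists_eq_succ_of_ne_zero hi
    rw [zchoose_zero_succ, zero_smul])] at h
  simp only [Nat.cast_zero, add_zero, zero_add, sub_zero, zchoose_self_zero, one_smul] at h
  rw [h]
  apply finsum_congr
  intro i
  ring_nf

/-- Borcherds identity with `r = 0` (commutator formula). -/
lemma borcherds_r0 (u v w : V) (p q : ℤ) :
    (∑ᶠ i : ℕ, zchoose p i • VA.mode (VA.mode u (0 + i) v) (p + q - i) w) =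
      VA.mode u p (VA.mode v q w) - VA.mode v q (VA.mode u p w) := by
  have h := VA.borcherds u v w p q 0
  rw [h]
  rw [finsum_eq_single _ 0 (by
    intro i hi
    obtain ⟨j, rfl⟩ := Nat.exists_eq_succ_of_ne_zero hi
    rw [zchoose_zero_succ, mul_zero, zero_smul])]
  simp [zchoose_self_zero, zpow_zero]

/-- the 0-mode is a derivation of every product -/
lemma deriv0 (u v w : V) (q : ℤ) :
    VA.mode (VA.mode u 0 v) q w =
      VA.mode u 0 (VA.mode v q w) - VA.mode v q (VA.mode u 0 w) := by
  have h := VA.borcherds_r0 u v w 0 q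
  rw [finsum_eq_single _ 0 (by
    intro i hi
    obtain ⟨j, rfl⟩ := Nat.exists_eq_succ_of_ne_zero hi
    rw [zchoose_zero_succ, zero_smul])] at h
  simpa [zchoose_self_zero] using h

lemma mem_C2_gen (x y : V) : VA.mode x (-2) y ∈ VA.C2 :=
  Submodule.subset_span ⟨x, y, rfl⟩

/-- modes of the translate: `(𝒟x)_p = -p x_{p-1}` -/
lemma D_mode (x w : V) (p : ℤ) :
    VA.mode (VA.D x) p w = (-(p : ℂ)) • VA.mode x (p - 1) w := by
  have h := VA.borcherds x VA.one w p 0 (-2)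
  rw [finsum_eq_two _ (by
    intro i hi
    have : VA.mode x (-2 + i) VA.one = 0 := VA.creation_nonneg x _ (by omega)
    rw [this, VA.mode_zero_left, smul_zero])] at h
  have hrhs : (∑ᶠ i : ℕ, ((-1 : ℂ) ^ i * zchoose (-2) i) •
      (VA.mode x (p + -2 - i) (VA.mode VA.one (0 + i) w) -
        ((-1 : ℂ) ^ (-2 : ℤ)) • VA.mode VA.one (0 + -2 - i) (VA.mode x (p + i) w))) = 0 := by
    apply finsum_eq_zero_of_forall_eq_zero
    intro i
    rw [VA.vacuum_left, VA.vacuum_left, if_neg (by omega), if_neg (by omega),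
      VA.mode_zero_right, smul_zero, sub_zero, smul_zero]
  rw [hrhs] at h
  simp only [Nat.cast_zero, add_zero, sub_zero, Nat.cast_one, zchoose_self_zero, one_smul,
    zchoose_one] at h
  have h1 : VA.mode x (-2 + (1 : ℤ)) VA.one = x := by norm_num [VA.creation]
  rw [h1] at h
  have h2 := eq_neg_of_add_eq_zero_left h
  rw [show VA.mode x (-2) VA.one = VA.D x from rfl] at h2
  rw [h2, neg_smul]

lemma mem_C2_of_le (x y : V) (n : ℤ) (hn : n ≤ -2) : VA.mode x n y ∈ VA.C2 := by
  obtain ⟨m, rfl⟩ : ∃ m : ℕ, n = -2 - m := ⟨(-2 - n).toNat, by omega⟩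
  clear hn
  induction m generalizing x y with
  | zero => simpa using VA.mem_C2_gen x y
  | succ j ih =>
    have h := VA.D_mode x y (-2 - j)
    have harith : (-2 : ℤ) - j - 1 = -2 - (j + 1 : ℕ) := by push_cast; ring
    rw [harith] at h
    have hmem : VA.mode (VA.D x) (-2 - j) y ∈ VA.C2 := ih (VA.D x) y
    rw [h] at hmem
    have hne : (-(( -2 - (j:ℤ) : ℤ) : ℂ)) ≠ 0 := by
      push_cast
      intro hc
      have h3 : ((j + 2 : ℕ) : ℂ) = 0 := by push_cast; linear_combination hc
      have h4 : (j + 2 : ℕ) = 0 := by exact_mod_cast h3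
      omega
    have := VA.C2.smul_mem (-((-2 - (j:ℤ) : ℤ) : ℂ))⁻¹ hmem
    rwa [inv_smul_smul₀ hne] at this

/-- `C₂` is closed under left multiplication by `b_s`, `s ≤ 0`. -/
lemma C2_mode_left (b : V) (s : ℤ) (hs : s ≤ 0) {c : V} (hc : c ∈ VA.C2) :
    VA.mode b s c ∈ VA.C2 := by
  have hle : VA.C2 ≤ Submodule.comap (VA.rmode b s) VA.C2 := by
    rw [VertexAlgebra.C2, Submodule.span_le]
    rintro _ ⟨x, y, rfl⟩
    simp only [SetLike.mem_coe, Submodule.mem_comap, rmode_apply]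
    have h := VA.borcherds_r0 b x y s (-2)
    have h2 : VA.mode b s (VA.mode x (-2) y) =
        (∑ᶠ i : ℕ, zchoose s i • VA.mode (VA.mode b (0 + i) x) (s + -2 - i) y) +
          VA.mode x (-2) (VA.mode b s y) := by
      rw [h]; ring_nf; abel
    rw [h2]
    refine VA.C2.add_mem (finsum_mem_submodule _ _ fun i => ?_) (VA.mem_C2_gen _ _)
    exact VA.C2.smul_mem _ (VA.mem_C2_of_le _ _ _ (by omega))
  exact hle hc

/-- `C₂` is closed under right multiplication: `c_s w ∈ C₂` for `c ∈ C₂`, `s ≤ 0`. -/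
lemma C2_mode_right {c : V} (hc : c ∈ VA.C2) (s : ℤ) (hs : s ≤ 0) (w : V) :
    VA.mode c s w ∈ VA.C2 := by
  have hle : VA.C2 ≤ Submodule.comap (VA.lmode s w) VA.C2 := by
    rw [VertexAlgebra.C2, Submodule.span_le]
    rintro _ ⟨x, y, rfl⟩
    simp only [SetLike.mem_coe, Submodule.mem_comap, lmode_apply]
    rw [VA.borcherds_p0 x y w s (-2)]
    refine finsum_mem_submodule _ _ fun i => VA.C2.smul_mem _ (VA.C2.sub_mem ?_ ?_)
    · exact VA.mem_C2_of_le _ _ _ (by omega)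
    · exact VA.C2.smul_mem _ (VA.mem_C2_of_le _ _ _ (by omega))
  exact hle hc

/-- skew-symmetry consequence: `u_0 u ∈ C₂`. -/
lemma self_zero_mem_C2 (u : V) : VA.mode u 0 u ∈ VA.C2 := by
  have h := VA.borcherds u u VA.one (-1) 0 0
  conv at h => rhs; rw [finsum_eq_single _ 0 (by
    intro i hi
    obtain ⟨j, rfl⟩ := Nat.exists_eq_succ_of_ne_zero hi
    rw [zchoose_zero_succ, mul_zero, zero_smul])]
  obtain ⟨N, hN⟩ := VA.trunc u u
  set f : ℕ → V := fun i => zchoose (-1) i • VA.mode (VA.mode u (0 + i) u) (-1 + 0 - i) VA.one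
    with hf
  have hfin : (Function.support f).Finite := by
    apply Set.Finite.subset (Set.finite_Icc 0 N.toNat)
    intro i hi
    simp only [Function.mem_support, hf] at hi
    by_contra hc
    simp only [Set.mem_Icc, not_and, not_le] at hc
    have hi2 : (N : ℤ) ≤ (i : ℤ) := by
      have := hc (Nat.zero_le i)
      omega
    rw [hN _ (by omega), VA.mode_zero_left, smul_zero] at hi
    exact hi rfl
  rw [finsum_eq_head_add f hfin] at h
  have hf0 : f 0 = VA.mode (VA.mode u 0 u) (-1) VA.one := by
    simp [hf, zchoose_self_zero]
  rw [hf0, VA.creation] at h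
  simp only [pow_zero, one_mul, zpow_zero, zchoose_self_zero, one_smul, Nat.cast_zero,
    add_zero, zero_add, sub_zero] at h
  rw [VA.creation_nonneg u 0 le_rfl, VA.mode_zero_right, VA.creation, zero_sub] at h
  set c : V := ∑ᶠ i : ℕ, (if i = 0 then 0 else f i) with hcdef
  have hc : c ∈ VA.C2 := by
    refine finsum_mem_submodule _ _ fun i => ?_
    by_cases h0 : i = 0
    · rw [if_pos h0]; exact VA.C2.zero_mem
    · rw [if_neg h0]
      simp only [hf]
      exact VA.C2.smul_mem _ (VA.mem_C2_of_le _ _ _ (by omega))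
  have h2 : (2 : ℂ) • VA.mode u 0 u = -c := by
    rw [two_smul, eq_neg_iff_add_eq_zero, add_assoc, h]
    abel
  have h3 := VA.C2.smul_mem ((2 : ℂ)⁻¹) (h2 ▸ VA.C2.neg_mem hc)
  rwa [inv_smul_smul₀ two_ne_zero] at h3


@[simp] lemma pow_zero' (a : V) : VA.pow a 0 = VA.one := rfl
lemma pow_succ' (a : V) (t : ℕ) : VA.pow a (t + 1) = VA.mode a (-1) (VA.pow a t) := rfl
lemma pow_one' (a : V) : VA.pow a 1 = a := by
  rw [pow_succ', pow_zero', VA.creation]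

lemma word_nil (a : V) : VA.word a [] = a := rfl
lemma word_cons (a : V) (n : ℤ) (ns : List ℤ) :
    VA.word a (n :: ns) = VA.mode a n (VA.word a ns) := rfl

/-- `u_0 (u^t) ∈ C₂` for all `t`. -/
lemma zero_pow_mem_C2 (u : V) : ∀ t : ℕ, VA.mode u 0 (VA.pow u t) ∈ VA.C2 := by
  intro t
  induction t with
  | zero =>
    rw [pow_zero', VA.creation_nonneg u 0 le_rfl]
    exact VA.C2.zero_mem
  | succ t ih =>
    rw [pow_succ']
    have h := VA.deriv0 u u (VA.pow u t) (-1)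
    have h2 : VA.mode u 0 (VA.mode u (-1) (VA.pow u t)) =
        VA.mode (VA.mode u 0 u) (-1) (VA.pow u t) + VA.mode u (-1) (VA.mode u 0 (VA.pow u t)) := by
      rw [h]; abel
    rw [h2]
    exact VA.C2.add_mem
      (VA.C2_mode_right (VA.self_zero_mem_C2 u) (-1) (by omega) _)
      (VA.C2_mode_left u (-1) (by omega) ih)

/-- classification of good words: either already in `C₂`, or a pure `(-1)`-power. -/
lemma word_good (u : V) (ns : List ℤ) (h : GoodIdx ns) :
    VA.word u ns ∈ VA.C2 ∨ VA.word u ns = VA.pow u (ns.length + 1) := by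
  induction ns with
  | nil => right; rw [word_nil, List.length_nil]; exact (VA.pow_one' u).symm
  | cons n rest ih =>
    have hrest := ih (fun m hm => h m (List.mem_cons_of_mem n hm))
    have hn := h n List.mem_cons_self
    rcases hrest with hc | he
    · left
      rw [word_cons]
      exact VA.C2_mode_left u n (by rcases hn with h | h <;> omega) hc
    · rcases hn with h0 | h1
      · left
        rw [word_cons, he, h0]
        exact VA.zero_pow_mem_C2 u _
      · right
        rw [word_cons, he, h1, List.length_cons]
        rfl


end VertexAlgebra
namespace VertexOperatorAlgebraAux

open VertexAlgebra
open scoped DirectSum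

variable (VOA : VertexOperatorAlgebra V)

/-- the linear equivalence underlying the internal grading -/
noncomputable def gradeEquiv : (⨁ n : ℤ, ↥(VOA.grade n)) ≃ₗ[ℂ] V :=
  LinearEquiv.ofBijective (DirectSum.coeLinearMap VOA.grade) VOA.internal

/-- linear projection onto the `m`-th graded piece -/
noncomputable def proj (m : ℤ) : V →ₗ[ℂ] V :=
  (VOA.grade m).subtype ∘ₗ (DirectSum.component ℂ ℤ (fun n => VOA.grade n) m) ∘ₗ
    (gradeEquiv VOA).symm.toLinearMap

lemma proj_apply (m : ℤ) (v : V) :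
    proj VOA m v = (((gradeEquiv VOA).symm v) m : V) := rfl

lemma proj_mem (m : ℤ) (v : V) : proj VOA m v ∈ VOA.grade m := by
  rw [proj_apply]; exact SetLike.coe_mem _

lemma proj_of_mem_same {m : ℤ} {v : V} (hv : v ∈ VOA.grade m) : proj VOA m v = v := by
  rw [proj_apply]
  unfold gradeEquiv
  rw [VOA.internal.ofBijective_coeLinearMap_of_mem hv]

lemma proj_of_mem_ne {n m : ℤ} (hnm : n ≠ m) {v : V} (hv : v ∈ VOA.grade n) :
    proj VOA m v = 0 := by
  rw [proj_apply]
  unfold gradeEquiv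
  rw [VOA.internal.ofBijective_coeLinearMap_of_mem_ne hnm hv]
  rfl

lemma exists_decomp (v : V) : ∃ s : Finset ℤ, v = ∑ m ∈ s, proj VOA m v := by
  classical
  set x := (gradeEquiv VOA).symm v with hx
  have h1 : v = DirectSum.coeLinearMap VOA.grade x := by
    rw [hx]
    exact ((gradeEquiv VOA).apply_symm_apply v).symm
  rw [DirectSum.coeLinearMap_eq_dfinsuppSum, DFinsupp.sum] at h1
  refine ⟨x.support, ?_⟩
  conv_lhs => rw [h1]
  refine Finset.sum_congr rfl fun m _ => ?_
  rw [proj_apply, ← hx]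

lemma proj_C2 (m : ℤ) {v : V} (hv : v ∈ VOA.toVertexAlgebra.C2) :
    proj VOA m v ∈ VOA.toVertexAlgebra.C2 := by
  set VA := VOA.toVertexAlgebra
  have hle : VA.C2 ≤ Submodule.comap (proj VOA m) VA.C2 := by
    rw [VertexAlgebra.C2, Submodule.span_le]
    rintro _ ⟨x, y, rfl⟩
    simp only [SetLike.mem_coe, Submodule.mem_comap]
    obtain ⟨s, hs⟩ := exists_decomp VOA x
    obtain ⟨t, ht⟩ := exists_decomp VOA y
    have hxy : VA.mode x (-2) y =
        ∑ a ∈ s, ∑ b ∈ t, VA.mode (proj VOA a x) (-2) (proj VOA b y) := by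
      conv_lhs => rw [hs, ht]
      rw [show (VA.mode (∑ a ∈ s, proj VOA a x) (-2) (∑ b ∈ t, proj VOA b y))
          = VA.lmode (-2) (∑ b ∈ t, proj VOA b y) (∑ a ∈ s, proj VOA a x) from rfl]
      rw [map_sum]
      refine Finset.sum_congr rfl fun a _ => ?_
      rw [show (VA.lmode (-2) (∑ b ∈ t, proj VOA b y) (proj VOA a x))
          = VA.rmode (proj VOA a x) (-2) (∑ b ∈ t, proj VOA b y) from rfl]
      rw [map_sum]
      rfl
    rw [hxy, map_sum]
    refine VA.C2.sum_mem fun a _ => ?_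
    rw [map_sum]
    refine VA.C2.sum_mem fun b _ => ?_
    have hg : VA.mode (proj VOA a x) (-2) (proj VOA b y) ∈ VOA.grade (a + b - (-2) - 1) :=
      VOA.mode_grade (proj_mem VOA a x) (proj_mem VOA b y)
    by_cases hm : a + b - (-2) - 1 = m
    · rw [proj_of_mem_same VOA (hm ▸ hg)]
      exact VA.mem_C2_gen _ _
    · rw [proj_of_mem_ne VOA hm hg]
      exact VA.C2.zero_mem
  exact hle hv

/-- only finitely many graded pieces are not contained in `C₂`. -/
lemma bad_finite (hc2 : FiniteDimensional ℂ (V ⧸ VOA.toVertexAlgebra.C2)) :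
    {n : ℤ | ¬ VOA.grade n ≤ VOA.toVertexAlgebra.C2}.Finite := by
  classical
  set VA := VOA.toVertexAlgebra
  set Bad := {n : ℤ | ¬ VOA.grade n ≤ VA.C2} with hBad
  have hx : ∀ n : Bad, ∃ x, x ∈ VOA.grade n ∧ x ∉ VA.C2 := by
    rintro ⟨n, hn⟩
    exact SetLike.not_le_iff_exists.1 hn
  choose x hx1 hx2 using hx
  have li : LinearIndependent ℂ (fun n : Bad => VA.C2.mkQ (x n)) := by
    rw [linearIndependent_iff']
    intro s g hg i hi
    have hy : (∑ j ∈ s, g j • x j) ∈ VA.C2 := by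
      rw [← Submodule.Quotient.mk_eq_zero]
      rw [show (Submodule.Quotient.mk (∑ j ∈ s, g j • x j) : V ⧸ VA.C2)
          = VA.C2.mkQ (∑ j ∈ s, g j • x j) from rfl]
      rw [map_sum]
      simpa only [map_smul] using hg
    have hp : proj VOA i (∑ j ∈ s, g j • x j) = g i • x i := by
      rw [map_sum]
      rw [Finset.sum_eq_single i]
      · rw [map_smul, proj_of_mem_same VOA (hx1 i)]
      · intro j _ hji
        rw [map_smul, proj_of_mem_ne VOA (fun hc => hji (Subtype.coe_injective hc)) (hx1 j),
          smul_zero]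
      · intro his
        exact absurd hi his
    have hmem : g i • x i ∈ VA.C2 := hp ▸ proj_C2 VOA i hy
    by_contra hgi
    exact hx2 i (by
      have := VA.C2.smul_mem (g i)⁻¹ hmem
      rwa [inv_smul_smul₀ hgi] at this)
  have : Finite Bad := li.finite
  exact Set.toFinite Bad

/-- the submodule spanned by all graded pieces of weight at least `N` -/
def hi (N : ℤ) : Submodule ℂ V := ⨆ n : ℤ, ⨆ _ : N ≤ n, VOA.grade n

lemma grade_le_hi {N n : ℤ} (h : N ≤ n) : VOA.grade n ≤ hi VOA N :=
  le_iSup_of_le n (le_iSup_of_le h le_rfl)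

lemma hi_mul {s t : ℤ} {a b : V} (ha : a ∈ hi VOA s) (hb : b ∈ hi VOA t) :
    VOA.toVertexAlgebra.mode a (-1) b ∈ hi VOA (s + t) := by
  set VA := VOA.toVertexAlgebra
  have H1 : ∀ n : ℤ, s ≤ n → ∀ a' ∈ VOA.grade n, VA.mode a' (-1) b ∈ hi VOA (s + t) := by
    intro n hn a' ha'
    have h2 : hi VOA t ≤ Submodule.comap (VA.rmode a' (-1)) (hi VOA (s + t)) := by
      refine iSup₂_le fun m hm => ?_
      intro w hw
      simp only [Submodule.mem_comap, rmode_apply]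
      have hg : VA.mode a' (-1) w ∈ VOA.grade (n + m - (-1) - 1) :=
        VOA.mode_grade ha' hw
      have : n + m - (-1) - 1 = n + m := by ring
      rw [this] at hg
      exact grade_le_hi VOA (by omega) hg
    exact h2 hb
  have h3 : hi VOA s ≤ Submodule.comap (VA.lmode (-1) b) (hi VOA (s + t)) := by
    refine iSup₂_le fun n hn => ?_
    intro a' ha'
    simp only [Submodule.mem_comap, lmode_apply]
    exact H1 n hn a' ha'
  exact h3 ha

lemma pow_mem_hi {u : V} (hu : u ∈ hi VOA 1) :
    ∀ t : ℕ, VOA.toVertexAlgebra.pow u t ∈ hi VOA t := by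
  intro t
  induction t with
  | zero => exact grade_le_hi VOA le_rfl VOA.one_mem
  | succ t ih =>
    have := hi_mul VOA hu ih
    rw [VOA.toVertexAlgebra.pow_succ']
    have harith : (1 : ℤ) + t = ((t + 1 : ℕ) : ℤ) := by push_cast; ring
    rwa [harith] at this

end VertexOperatorAlgebraAux


end Aux

/-- Let `V` be a `C₂`-cofinite vertex operator algebra and `M ⊇ C₂(V)`.
If `u ∈ ⊕_{i=1}^k V_i` for some positive integer `k`, then `u ∈ sr_{0,-1}(M)`. -/
theorem stmt16 {V : Type} [AddCommGroup V] [Module ℂ V] (VOA : VertexOperatorAlgebra V)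
    (hc2 : FiniteDimensional ℂ (V ⧸ VOA.toVertexAlgebra.C2))
    (M : Submodule ℂ V) (hM : VOA.toVertexAlgebra.C2 ≤ M)
    (u : V) (k : ℤ) (hk : 1 ≤ k) (hu : u ∈ ⨆ i ∈ Finset.Icc (1 : ℤ) k, VOA.grade i) :
    u ∈ VOA.toVertexAlgebra.srad (M : Set V) := by
  classical
  set VA := VOA.toVertexAlgebra with hVA
  have hbad := VertexOperatorAlgebraAux.bad_finite VOA hc2
  obtain ⟨b, hb⟩ := hbad.bddAbove
  set N : ℤ := max (b + 1) 1 with hN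
  have hgrade : ∀ n : ℤ, N ≤ n → VOA.grade n ≤ VA.C2 := by
    intro n hn
    by_contra hc
    have := hb (show n ∈ {n : ℤ | ¬ VOA.grade n ≤ VOA.toVertexAlgebra.C2} from hc)
    omega
  have hhi : VertexOperatorAlgebraAux.hi VOA N ≤ VA.C2 := iSup₂_le hgrade
  have hu1 : u ∈ VertexOperatorAlgebraAux.hi VOA 1 := by
    refine (iSup₂_le fun i hik => ?_ : (⨆ i ∈ Finset.Icc (1 : ℤ) k, VOA.grade i) ≤ _) hu
    exact VertexOperatorAlgebraAux.grade_le_hi VOA (Finset.mem_Icc.1 hik).1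
  have hpow : ∀ t : ℕ, N ≤ (t : ℤ) → VA.pow u t ∈ VA.C2 := by
    intro t ht
    have h1 := VertexOperatorAlgebraAux.pow_mem_hi VOA hu1 t
    have h2 : VertexOperatorAlgebraAux.hi VOA (t : ℤ) ≤ VertexOperatorAlgebraAux.hi VOA N :=
      iSup₂_le fun n hn => VertexOperatorAlgebraAux.grade_le_hi VOA (le_trans ht hn)
    exact hhi (h2 h1)
  have key : ∀ ns : List ℤ, GoodIdx ns → N.toNat ≤ ns.length → VA.word u ns ∈ VA.C2 := by
    intro ns hg hl
    rcases VA.word_good u ns hg with hc | he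
    · exact hc
    · rw [he]
      refine hpow _ ?_
      have h3 : N ≤ (ns.length : ℤ) := Int.toNat_le.1 hl
      push_cast
      omega
  refine ⟨?_, ?_⟩
  · intro bb
    refine ⟨N.toNat, fun ns s hg hl hs => ?_⟩
    exact hM (VA.C2_mode_left bb s (by rcases hs with h | h <;> omega) (key ns hg hl))
  · intro w
    refine ⟨N.toNat, fun ns s hg hl hs => ?_⟩
    exact hM (VA.C2_mode_right (key ns hg hl) s (by rcases hs with h | h <;> omega) w)
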